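/- For every n ≥ 2: (a) lb(w(σ)) ≤ ⌊(n-1)²/4⌋ for every σ ∈ Π_n(12/3), with equality for at least one σ; and (b) for every k ≥ 1, the number of σ ∈ Π_n(12/3) with lb(w(σ)) = k equals D_k = #{d ≥ 1 : d divides k and d + k/d + 1 ≤ n}. -/

import Mathlib

open Finset

/-- `IsRGF w` : `w = a₁⋯aₙ` is a restricted growth function: all letters are
positive, the first letter is `1` and each later letter is at most one more
than the maximum of the preceding prefix. -/
def IsRGF (w : List ℕ) : Prop :=
  (∀ a ∈ w, 1 ≤ a) ∧
  (0 < w.length → w.getD 0 0 = 1) ∧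
  (∀ j : ℕ, j + 1 < w.length →
    w.getD (j + 1) 0 ≤ 1 + (w.take (j + 1)).foldr max 0)

/-- The set partition encoded by the word `w` contains the set-partition
pattern encoded by the word `p`:  there are positions, listed increasingly,
whose "same block" (= same letter) pattern in `w` is exactly that of `p`. -/
def ContainsPat (w p : List ℕ) : Prop :=
  ∃ f : Fin p.length → Fin w.length, StrictMono f ∧
    ∀ a b : Fin p.length, (w.get (f a) = w.get (f b) ↔ p.get a = p.get b)

/-- `Rn n p` : the restricted growth functions of length `n` whose associated
set partition avoids the pattern (of set partitions) encoded by the RGF `p`.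
Via the standard bijection `σ ↦ w(σ)` this is `R_n(π) ≅ Π_n(π)`.
Patterns of `[3]`:  `1/2/3 ↦ [1,2,3]`, `1/23 ↦ [1,2,2]`, `13/2 ↦ [1,2,1]`,
`12/3 ↦ [1,1,2]`, `123 ↦ [1,1,1]`. -/
def Rn (n : ℕ) (p : List ℕ) : Set (List ℕ) :=
  {w | w.length = n ∧ IsRGF w ∧ ¬ ContainsPat w p}

/-- `lb` : sum over positions `j` of the number of distinct values occurring
before position `j` that are bigger than the letter at `j`. -/
def statLB (w : List ℕ) : ℕ :=
  ∑ j ∈ Finset.range w.length,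
    ((w.take j).toFinset.filter (fun v => w.getD j 0 < v)).card

/-- `ls` : left and smaller. -/
def statLS (w : List ℕ) : ℕ :=
  ∑ j ∈ Finset.range w.length,
    ((w.take j).toFinset.filter (fun v => v < w.getD j 0)).card

/-- `rb` : right and bigger. -/
def statRB (w : List ℕ) : ℕ :=
  ∑ j ∈ Finset.range w.length,
    ((w.drop (j + 1)).toFinset.filter (fun v => w.getD j 0 < v)).card

/-- `rs` : right and smaller. -/
def statRS (w : List ℕ) : ℕ :=
  ∑ j ∈ Finset.range w.length,
    ((w.drop (j + 1)).toFinset.filter (fun v => v < w.getD j 0)).card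

/-- The four–variable generating function
`F_n(π;q,r,s,t) = ∑_{σ∈Π_n(π)} q^{lb} r^{ls} s^{rb} t^{rs}`, with
`q = X 0`, `r = X 1`, `s = X 2`, `t = X 3`. -/
noncomputable def Fgen (n : ℕ) (p : List ℕ) : MvPolynomial (Fin 4) ℤ :=
  ∑ᶠ w ∈ Rn n p,
    (MvPolynomial.X 0 : MvPolynomial (Fin 4) ℤ) ^ statLB w *
      MvPolynomial.X 1 ^ statLS w *
      MvPolynomial.X 2 ^ statRB w *
      MvPolynomial.X 3 ^ statRS w

/-- `LB_n(π;q)`. -/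
noncomputable def LBp (n : ℕ) (p : List ℕ) : Polynomial ℤ :=
  ∑ᶠ w ∈ Rn n p, Polynomial.X ^ statLB w

/-- `LS_n(π;q)`. -/
noncomputable def LSp (n : ℕ) (p : List ℕ) : Polynomial ℤ :=
  ∑ᶠ w ∈ Rn n p, Polynomial.X ^ statLS w

/-- `RB_n(π;q)`. -/
noncomputable def RBp (n : ℕ) (p : List ℕ) : Polynomial ℤ :=
  ∑ᶠ w ∈ Rn n p, Polynomial.X ^ statRB w

/-- `RS_n(π;q)`. -/
noncomputable def RSp (n : ℕ) (p : List ℕ) : Polynomial ℤ :=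
  ∑ᶠ w ∈ Rn n p, Polynomial.X ^ statRS w
-- auxiliary defs
def asc (m : ℕ) : List ℕ := (List.range m).map (· + 1)

def Wrd (m a e : ℕ) : List ℕ := asc m ++ List.replicate e a

lemma asc_length (m : ℕ) : (asc m).length = m := by simp [asc]

lemma Wrd_length (m a e : ℕ) : (Wrd m a e).length = m + e := by simp [Wrd, asc]

lemma mem_asc {v m : ℕ} : v ∈ asc m ↔ 1 ≤ v ∧ v ≤ m := by
  simp only [asc, List.mem_map, List.mem_range]
  constructor
  · rintro ⟨i, hi, rfl⟩; omega
  · rintro ⟨h1, h2⟩; exact ⟨v - 1, by omega, by omega⟩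

lemma mem_Wrd {v m a e : ℕ} (h1 : 1 ≤ a) (h2 : a ≤ m) :
    v ∈ Wrd m a e ↔ 1 ≤ v ∧ v ≤ m := by
  simp only [Wrd, List.mem_append, mem_asc, List.mem_replicate]
  constructor
  · rintro (h | ⟨-, rfl⟩)
    · exact h
    · exact ⟨h1, h2⟩
  · exact Or.inl

lemma Wrd_getD_lt {m a e j : ℕ} (h : j < m) : (Wrd m a e).getD j 0 = j + 1 := by
  rw [List.getD_eq_getElem _ _ (by rw [Wrd_length]; omega)]
  simp only [Wrd]
  rw [List.getElem_append_left (by rw [asc_length]; exact h)]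
  simp [asc]

lemma Wrd_getD_ge {m a e j : ℕ} (h1 : m ≤ j) (h2 : j < m + e) :
    (Wrd m a e).getD j 0 = a := by
  rw [List.getD_eq_getElem _ _ (by rw [Wrd_length]; omega)]
  simp only [Wrd]
  rw [List.getElem_append_right (by rw [asc_length]; omega)]
  simp [asc]

lemma Wrd_take_le {m a e j : ℕ} (h : j ≤ m) : (Wrd m a e).take j = asc j := by
  simp only [Wrd, List.take_append, asc_length]
  rw [show j - m = 0 from by omega]
  simp only [List.take_zero, List.append_nil, asc]
  rw [← List.map_take, List.take_range, min_eq_left h]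

lemma Wrd_take_ge {m a e j : ℕ} (h : m ≤ j) :
    (Wrd m a e).take j = Wrd m a (min (j - m) e) := by
  simp only [Wrd, List.take_append, asc_length]
  rw [List.take_of_length_le (by rw [asc_length]; omega), List.take_replicate]

lemma le_foldr_max {l : List ℕ} {x : ℕ} (h : x ∈ l) : x ≤ l.foldr max 0 := by
  induction l with
  | nil => simp at h
  | cons y t ih =>
    rcases List.mem_cons.mp h with rfl | h
    · exact le_max_left _ _
    · exact le_trans (ih h) (le_max_right _ _)

lemma foldr_max_le {l : List ℕ} {B : ℕ} (h : ∀ x ∈ l, x ≤ B) : l.foldr max 0 ≤ B := by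
  induction l with
  | nil => simp
  | cons y t ih =>
    simp only [List.foldr_cons]
    exact max_le (h y (by simp)) (ih fun x hx => h x (by simp [hx]))

lemma Wrd_isRGF {m a e : ℕ} (h1 : 1 ≤ a) (h2 : a ≤ m) : IsRGF (Wrd m a e) := by
  refine ⟨?_, ?_, ?_⟩
  · intro x hx
    exact ((mem_Wrd h1 h2).mp hx).1
  · intro _
    exact Wrd_getD_lt (by omega)
  · intro j hj
    rw [Wrd_length] at hj
    by_cases hjm : j + 1 < m
    · rw [Wrd_getD_lt hjm]
      have hmem : j + 1 ∈ (Wrd m a e).take (j + 1) := by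
        rw [Wrd_take_le (by omega)]
        exact mem_asc.mpr ⟨by omega, le_rfl⟩
      have := le_foldr_max hmem
      omega
    · rw [Wrd_getD_ge (by omega) (by omega)]
      have hmem : m ∈ (Wrd m a e).take (j + 1) := by
        rw [Wrd_take_ge (by omega)]
        exact (mem_Wrd h1 h2).mpr ⟨by omega, le_rfl⟩
      have := le_foldr_max hmem
      omega

lemma getD_of_get {w : List ℕ} (i : Fin w.length) : w.get i = w.getD i.1 0 := by
  rw [List.getD_eq_getElem _ _ i.2]
  rfl

lemma avoid_of (w : List ℕ)
    (H : ∀ i j k : ℕ, i < j → j < k → k < w.length →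
      w.getD i 0 = w.getD j 0 → w.getD k 0 = w.getD i 0) :
    ¬ ContainsPat w [1, 1, 2] := by
  rintro ⟨f, hmono, hiff⟩
  have h01 : w.get (f ⟨0, by norm_num⟩) = w.get (f ⟨1, by norm_num⟩) :=
    (hiff _ _).mpr rfl
  have h02 : ¬ w.get (f ⟨0, by norm_num⟩) = w.get (f ⟨2, by norm_num⟩) := by
    intro h
    have := (hiff ⟨0, by norm_num⟩ ⟨2, by norm_num⟩).mp h
    simp [List.get] at this
  rw [getD_of_get, getD_of_get] at h01
  rw [getD_of_get, getD_of_get] at h02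
  have hf01 : (f ⟨0, by norm_num⟩).1 < (f ⟨1, by norm_num⟩).1 :=
    hmono (by exact Fin.mk_lt_mk.mpr (by norm_num))
  have hf12 : (f ⟨1, by norm_num⟩).1 < (f ⟨2, by norm_num⟩).1 :=
    hmono (by exact Fin.mk_lt_mk.mpr (by norm_num))
  exact h02 ((H _ _ _ hf01 hf12 (f ⟨2, by norm_num⟩).2 h01).symm)

lemma contains_of (w : List ℕ) (i j k : ℕ) (hij : i < j) (hjk : j < k)
    (hk : k < w.length) (he : w.getD i 0 = w.getD j 0)
    (hne : w.getD k 0 ≠ w.getD i 0) : ContainsPat w [1, 1, 2] := by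
  refine ⟨![⟨i, by omega⟩, ⟨j, by omega⟩, ⟨k, hk⟩], ?_, ?_⟩
  · intro a b hab
    fin_cases a <;> fin_cases b <;>
      simp_all [Fin.lt_def, Fin.mk_lt_mk] <;> omega
  · have hi : i < w.length := by omega
    have hj : j < w.length := by omega
    rw [List.getD_eq_getElem _ _ hi, List.getD_eq_getElem _ _ hj] at he
    rw [List.getD_eq_getElem _ _ hk, List.getD_eq_getElem _ _ hi] at hne
    intro a b
    fin_cases a <;> fin_cases b <;> simp [List.get] <;> omega

lemma getD_mem {w : List ℕ} {j : ℕ} (h : j < w.length) : w.getD j 0 ∈ w := by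
  rw [List.getD_eq_getElem _ _ h]
  exact List.getElem_mem _

lemma asc_prefix {w : List ℕ} (hw : IsRGF w) {m : ℕ} (hm : m ≤ w.length)
    (hd : ∀ i j, i < j → j < m → w.getD i 0 ≠ w.getD j 0) :
    ∀ j, j < m → w.getD j 0 = j + 1 := by
  intro j
  induction j using Nat.strong_induction_on with
  | _ j ih =>
    intro hj
    rcases Nat.eq_zero_or_pos j with rfl | hj0
    · exact hw.2.1 (by omega)
    · obtain ⟨j', rfl⟩ : ∃ j', j = j' + 1 := ⟨j - 1, by omega⟩
      have hub := hw.2.2 j' (by omega)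
      have hmax : (w.take (j' + 1)).foldr max 0 ≤ j' + 1 := by
        apply foldr_max_le
        intro x hx
        obtain ⟨t, ht, hxt⟩ := List.mem_iff_getElem.mp hx
        have ht' : t < j' + 1 := by
          have : (w.take (j' + 1)).length = min (j' + 1) w.length := List.length_take
          omega
        rw [List.getElem_take] at hxt
        have := ih t (by omega) (by omega)
        rw [List.getD_eq_getElem _ _ (by omega)] at this
        omega
      have hpos : 1 ≤ w.getD (j' + 1) 0 := hw.1 _ (getD_mem (by omega))
      have hvne : ∀ i, i < j' + 1 → w.getD (j' + 1) 0 ≠ i + 1 := by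
        intro i hi hcontra
        exact hd i (j' + 1) hi hj (by rw [ih i (by omega) (by omega), hcontra])
      have := hvne (w.getD (j' + 1) 0 - 1)
      omega

lemma struct {n : ℕ} (hn : 1 ≤ n) {w : List ℕ} (hw : w ∈ Rn n [1, 1, 2]) :
    ∃ m a e, n = m + e ∧ 1 ≤ a ∧ a ≤ m ∧ w = Wrd m a e := by
  classical
  obtain ⟨hlen, hrgf, havoid⟩ := hw
  by_cases H : ∃ j, j < w.length ∧ ∃ i, i < j ∧ w.getD i 0 = w.getD j 0
  · obtain ⟨hmlen, i, him, heq⟩ := Nat.find_spec H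
    set m := Nat.find H with hm
    have hdist : ∀ i' j', i' < j' → j' < m → w.getD i' 0 ≠ w.getD j' 0 := by
      intro i' j' h1 h2 hcontra
      exact Nat.find_min H h2 ⟨by omega, i', h1, hcontra⟩
    have hasc := asc_prefix hrgf (le_of_lt hmlen) hdist
    have ha : w.getD m 0 = i + 1 := by rw [← heq, hasc i him]
    have htail : ∀ k, m < k → k < w.length → w.getD k 0 = w.getD m 0 := by
      intro k h1 h2
      by_contra hne
      exact havoid (contains_of w i m k him h1 h2 heq
        (fun hcon => hne (hcon.trans heq)))
    refine ⟨m, w.getD m 0, n - m, by omega, by omega, by omega, ?_⟩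
    apply List.ext_getElem
    · rw [Wrd_length]; omega
    intro t h1 h2
    rw [← List.getD_eq_getElem w 0 h1, ← List.getD_eq_getElem _ 0 h2]
    by_cases ht : t < m
    · rw [Wrd_getD_lt ht, hasc t ht]
    · rw [Wrd_getD_ge (by omega) (by rw [Wrd_length] at h2; omega)]
      rcases eq_or_lt_of_le (not_lt.mp ht) with hteq | htgt
      · rw [← hteq]
      · exact htail t htgt h1
  · push_neg at H
    refine ⟨n, 1, 0, by omega, le_rfl, hn, ?_⟩
    have hdist : ∀ i j, i < j → j < n → w.getD i 0 ≠ w.getD j 0 := by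
      intro i j h1 h2 hcontra
      exact H j (by omega) i h1 hcontra
    have hasc := asc_prefix hrgf (m := n) (le_of_eq hlen.symm) hdist
    apply List.ext_getElem
    · rw [Wrd_length]; omega
    intro t ht1 ht2
    rw [← List.getD_eq_getElem w 0 ht1, ← List.getD_eq_getElem _ 0 ht2,
      Wrd_getD_lt (by omega), hasc t (by omega)]

lemma Wrd_mem_Rn {m a e : ℕ} (h1 : 1 ≤ a) (h2 : a ≤ m) :
    Wrd m a e ∈ Rn (m + e) [1, 1, 2] := by
  refine ⟨Wrd_length m a e, Wrd_isRGF h1 h2, avoid_of _ ?_⟩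
  intro i j k hij hjk hk heq
  rw [Wrd_length] at hk
  by_cases hjm : j < m
  · rw [Wrd_getD_lt (by omega), Wrd_getD_lt hjm] at heq
    omega
  · have hj' : (Wrd m a e).getD j 0 = a := Wrd_getD_ge (by omega) (by omega)
    have hk' : (Wrd m a e).getD k 0 = a := Wrd_getD_ge (by omega) (by omega)
    rw [hk', heq, hj']

lemma statLB_Wrd {m a e : ℕ} (h1 : 1 ≤ a) (h2 : a ≤ m) :
    statLB (Wrd m a e) = e * (m - a) := by
  unfold statLB
  rw [Wrd_length, Finset.range_eq_Ico,
    ← Finset.sum_Ico_consecutive _ (Nat.zero_le m) (Nat.le_add_right m e)]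
  have hfirst : ∀ j ∈ Finset.Ico 0 m,
      (((Wrd m a e).take j).toFinset.filter (fun v => (Wrd m a e).getD j 0 < v)).card = 0 := by
    intro j hj
    rw [Finset.mem_Ico] at hj
    rw [Wrd_getD_lt hj.2, Wrd_take_le (by omega)]
    rw [Finset.card_eq_zero, Finset.filter_eq_empty_iff]
    intro v hv
    rw [List.mem_toFinset, mem_asc] at hv
    omega
  have hsecond : ∀ j ∈ Finset.Ico m (m + e),
      (((Wrd m a e).take j).toFinset.filter (fun v => (Wrd m a e).getD j 0 < v)).card = m - a := by
    intro j hj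
    rw [Finset.mem_Ico] at hj
    rw [Wrd_getD_ge hj.1 hj.2, Wrd_take_ge hj.1]
    have : (((Wrd m a (min (j - m) e)).toFinset).filter (fun v => a < v)) = Finset.Ioc a m := by
      ext v
      simp only [Finset.mem_filter, List.mem_toFinset, mem_Wrd h1 h2, Finset.mem_Ioc]
      omega
    rw [this, Nat.card_Ioc]
  rw [Finset.sum_congr rfl hfirst, Finset.sum_congr rfl hsecond]
  simp [mul_comm]

lemma prod_le_sq_div4 (x y t : ℕ) (h : x + y ≤ t) : x * y ≤ t ^ 2 / 4 := by
  have h0 := two_mul_le_add_sq x y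
  have h1 : 4 * (x * y) ≤ (x + y) ^ 2 := by nlinarith
  have h2 : (x + y) ^ 2 ≤ t ^ 2 := Nat.pow_le_pow_left h 2
  omega

lemma half_mul_eq (t : ℕ) : (t / 2) * (t - t / 2) = t ^ 2 / 4 := by
  rcases Nat.even_or_odd t with ⟨q, rfl⟩ | ⟨q, rfl⟩
  · rw [show (q + q) / 2 = q from by omega, show q + q - q = q from by omega,
      show (q + q) ^ 2 = 4 * (q * q) from by ring,
      Nat.mul_div_cancel_left _ (by norm_num : (0:ℕ) < 4)]
  · rw [show (2 * q + 1) / 2 = q from by omega, show 2 * q + 1 - q = q + 1 from by omega,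
      show (2 * q + 1) ^ 2 = 4 * (q * (q + 1)) + 1 from by ring,
      Nat.mul_add_div (by norm_num : (0:ℕ) < 4)]
    simp


/-- for `n ≥ 2`, (a) `lb ≤ ⌊(n-1)²/4⌋` on `Π_n(12/3)` with
equality attained, and (b) for `k ≥ 1` the number of `σ ∈ Π_n(12/3)` with
`lb(w(σ)) = k` is `D_k = #{d ≥ 1 : d ∣ k, d + k/d + 1 ≤ n}`. -/
theorem stmt14 (n : ℕ) (hn : 2 ≤ n) :
    ((∀ w ∈ Rn n [1, 1, 2], statLB w ≤ (n - 1) ^ 2 / 4) ∧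
      (∃ w ∈ Rn n [1, 1, 2], statLB w = (n - 1) ^ 2 / 4)) ∧
    (∀ k : ℕ, 1 ≤ k →
      {w ∈ Rn n [1, 1, 2] | statLB w = k}.ncard =
        {d : ℕ | 1 ≤ d ∧ d ∣ k ∧ d + k / d + 1 ≤ n}.ncard) := by
  constructor
  · constructor
    · intro w hw
      obtain ⟨m, a, e, hn', h1, h2, rfl⟩ := struct (by omega) hw
      rw [statLB_Wrd h1 h2]
      exact prod_le_sq_div4 e (m - a) (n - 1) (by omega)
    · have hq : (n - 1) / 2 ≤ n - 1 := Nat.div_le_self _ _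
      refine ⟨Wrd (n - (n - 1) / 2) 1 ((n - 1) / 2), ?_, ?_⟩
      · have hmem := Wrd_mem_Rn (m := n - (n - 1) / 2) (a := 1) (e := (n - 1) / 2)
          le_rfl (by omega)
        rwa [show n - (n - 1) / 2 + (n - 1) / 2 = n from by omega] at hmem
      · rw [statLB_Wrd le_rfl (by omega)]
        rw [show n - (n - 1) / 2 - 1 = (n - 1) - (n - 1) / 2 from by omega]
        exact half_mul_eq (n - 1)
  · intro k hk
    have hkey : {w ∈ Rn n [1, 1, 2] | statLB w = k} =
        (fun d => Wrd (n - k / d) (n - k / d - d) (k / d)) ''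
          {d : ℕ | 1 ≤ d ∧ d ∣ k ∧ d + k / d + 1 ≤ n} := by
      ext w
      simp only [Set.mem_setOf_eq, Set.mem_image]
      constructor
      · rintro ⟨hwR, hlb⟩
        obtain ⟨m, a, e, hn', h1, h2, rfl⟩ := struct (by omega) hwR
        rw [statLB_Wrd h1 h2] at hlb
        have he : 1 ≤ e := by
          rcases Nat.eq_zero_or_pos e with rfl | h
          · simp at hlb; omega
          · exact h
        have hd : 1 ≤ m - a := by
          rcases Nat.eq_zero_or_pos (m - a) with hz | h
          · rw [hz, mul_zero] at hlb; omega
          · exact h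
        have hkd : k / (m - a) = e := by
          rw [← hlb, Nat.mul_div_cancel _ (by omega : 0 < m - a)]
        refine ⟨m - a, ⟨hd, ⟨e, by rw [← hlb]; ring⟩, by rw [hkd]; omega⟩, ?_⟩
        rw [hkd, show n - e = m from by omega, show m - (m - a) = a from by omega]
      · rintro ⟨d, ⟨hd1, hdvd, hdn⟩, rfl⟩
        have hdk : d ≤ k := Nat.le_of_dvd (by omega) hdvd
        have he1 : 1 ≤ k / d := (Nat.one_le_div_iff (by omega)).mpr hdk
        have hedn : k / d + d + 1 ≤ n := by omega
        constructor
        · have hmem := Wrd_mem_Rn (m := n - k / d) (a := n - k / d - d) (e := k / d)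
            (by omega) (by omega)
          rwa [show n - k / d + k / d = n from by omega] at hmem
        · rw [statLB_Wrd (by omega) (by omega)]
          rw [show n - k / d - (n - k / d - d) = d from by omega]
          exact Nat.div_mul_cancel hdvd
    rw [hkey]
    apply Set.ncard_image_of_injOn
    have haux : ∀ d1 d2 : ℕ, (1 ≤ d1 ∧ d1 ∣ k ∧ d1 + k / d1 + 1 ≤ n) →
        (1 ≤ d2 ∧ d2 ∣ k ∧ d2 + k / d2 + 1 ≤ n) → k / d1 < k / d2 →
        Wrd (n - k / d1) (n - k / d1 - d1) (k / d1) ≠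
          Wrd (n - k / d2) (n - k / d2 - d2) (k / d2) := by
      rintro d1 d2 ⟨h11, h12, h13⟩ ⟨h21, h22, h23⟩ hlt heq
      have he1 : 1 ≤ k / d1 := (Nat.one_le_div_iff (by omega)).mpr (Nat.le_of_dvd (by omega) h12)
      have he2 : 1 ≤ k / d2 := (Nat.one_le_div_iff (by omega)).mpr (Nat.le_of_dvd (by omega) h22)
      have hcongr := congrArg (fun l => l.getD (n - k / d2) 0) heq
      rw [Wrd_getD_lt (by omega)] at hcongr
      rw [Wrd_getD_ge (by omega) (by omega)] at hcongr
      omega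
    intro d1 hd1 d2 hd2 heq
    simp only [Set.mem_setOf_eq] at hd1 hd2
    have he : k / d1 = k / d2 := by
      rcases lt_trichotomy (k / d1) (k / d2) with h | h | h
      · exact absurd heq (haux d1 d2 hd1 hd2 h)
      · exact h
      · exact absurd heq.symm (haux d2 d1 hd2 hd1 h)
    calc d1 = k / (k / d1) := (Nat.div_div_self hd1.2.1 (by omega)).symm
      _ = k / (k / d2) := by rw [he]
      _ = d2 := Nat.div_div_self hd2.2.1 (by omega)
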